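/- Let a, b, c, d be positive integers. The pair (X, Oz) associated to the complex surface V = {(x,y,z) ∈ ℂ³ : y^a = z^b·x^c + x^d} is Whitney (a)-regular at the origin if and only if a = 1, or d ≤ c, or (c < d < b + c and (a ≤ b or d·(a − b) < a·c)). -/

import Mathlib

set_option maxHeartbeats 1600000


open Filter

noncomputable section

/-- x-partial derivative of f(x,y,z) = y^a - z^b*x^c - x^d. -/
def fxC (b c d : ℕ) (x z : ℂ) : ℂ :=
  -(c : ℂ) * z ^ b * x ^ (c - 1) - (d : ℂ) * x ^ (d - 1)

/-- y-partial derivative of f. -/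
def fyC (a : ℕ) (y : ℂ) : ℂ := (a : ℂ) * y ^ (a - 1)

/-- z-partial derivative of f. -/
def fzC (b c : ℕ) (x z : ℂ) : ℂ := -(b : ℂ) * z ^ (b - 1) * x ^ c

/-- Hermitian norm on ℂ³. -/
def nrm3C (u v w : ℂ) : ℝ := Real.sqrt (‖u‖ ^ 2 + ‖v‖ ^ 2 + ‖w‖ ^ 2)

/-- Hermitian norm on ℂ². -/
def nrm2C (u v : ℂ) : ℝ := Real.sqrt (‖u‖ ^ 2 + ‖v‖ ^ 2)

/-- Norm of the gradient ∇f(x,y,z). -/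
def gradNormC (a b c d : ℕ) (x y z : ℂ) : ℝ :=
  nrm3C (fxC b c d x z) (fyC a y) (fzC b c x z)

/-- The gradient ∇f(x,y,z) is nonzero. -/
def gradNeC (a b c d : ℕ) (x y z : ℂ) : Prop :=
  ¬ (fxC b c d x z = 0 ∧ fyC a y = 0 ∧ fzC b c x z = 0)

/-- Membership in X = V \ Oz, where V = {y^a = z^b x^c + x^d} and Oz is the z-axis. -/
def inXC (a b c d : ℕ) (x y z : ℂ) : Prop :=
  y ^ a = z ^ b * x ^ c + x ^ d ∧ ¬ (x = 0 ∧ y = 0)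

/-- Whitney (a)-regularity of the pair (X, Oz) at the origin. -/
def aRegC (a b c d : ℕ) : Prop :=
  ∀ x y z : ℕ → ℂ,
    (∀ n, inXC a b c d (x n) (y n) (z n)) →
    Tendsto (fun n => (x n, y n, z n)) atTop (nhds ((0 : ℂ), (0 : ℂ), (0 : ℂ))) →
    (∀ n, gradNeC a b c d (x n) (y n) (z n)) →
    Tendsto (fun n => ‖fzC b c (x n) (z n)‖ / gradNormC a b c d (x n) (y n) (z n))
      atTop (nhds 0)

/-- The (bᵖⁱ) condition for the retraction π(x,y,z) = (0,0,z). -/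
def bpiC (a b c d : ℕ) : Prop :=
  ∀ x y z : ℕ → ℂ,
    (∀ n, inXC a b c d (x n) (y n) (z n)) →
    Tendsto (fun n => (x n, y n, z n)) atTop (nhds ((0 : ℂ), (0 : ℂ), (0 : ℂ))) →
    (∀ n, gradNeC a b c d (x n) (y n) (z n)) →
    Tendsto (fun n => ‖x n * fxC b c d (x n) (z n) + y n * fyC a (y n)‖ /
        (nrm2C (x n) (y n) * gradNormC a b c d (x n) (y n) (z n)))
      atTop (nhds 0)

/-- Whitney (b)-regularity of the pair (X, Oz) at the origin. -/
def bRegC (a b c d : ℕ) : Prop := aRegC a b c d ∧ bpiC a b c d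

/-- Kuo–Verdier (w)-regularity of the pair (X, Oz) at the origin. -/
def wRegC (a b c d : ℕ) : Prop :=
  ∃ C : ℝ, 0 < C ∧ ∃ ε : ℝ, 0 < ε ∧ ∀ x y z : ℂ,
    inXC a b c d x y z → nrm3C x y z < ε → gradNeC a b c d x y z →
    ‖fzC b c x z‖ ≤ C * nrm2C x y * gradNormC a b c d x y z

lemma nrm3_nonneg (u v w : ℂ) : 0 ≤ nrm3C u v w := Real.sqrt_nonneg _

lemma le_nrm3_fst (u v w : ℂ) : ‖u‖ ≤ nrm3C u v w :=
  calc ‖u‖ = Real.sqrt (‖u‖^2) := (Real.sqrt_sq (norm_nonneg u)).symm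
  _ ≤ _ := Real.sqrt_le_sqrt (by nlinarith [sq_nonneg ‖v‖, sq_nonneg ‖w‖])

lemma le_nrm3_snd (u v w : ℂ) : ‖v‖ ≤ nrm3C u v w :=
  calc ‖v‖ = Real.sqrt (‖v‖^2) := (Real.sqrt_sq (norm_nonneg v)).symm
  _ ≤ _ := Real.sqrt_le_sqrt (by nlinarith [sq_nonneg ‖u‖, sq_nonneg ‖w‖])

lemma le_nrm3_thd (u v w : ℂ) : ‖w‖ ≤ nrm3C u v w :=
  calc ‖w‖ = Real.sqrt (‖w‖^2) := (Real.sqrt_sq (norm_nonneg w)).symm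
  _ ≤ _ := Real.sqrt_le_sqrt (by nlinarith [sq_nonneg ‖u‖, sq_nonneg ‖v‖])

lemma nrm3_le_sum (u v w : ℂ) : nrm3C u v w ≤ ‖u‖ + ‖v‖ + ‖w‖ := by
  rw [show ‖u‖ + ‖v‖ + ‖w‖ = Real.sqrt ((‖u‖ + ‖v‖ + ‖w‖)^2) by
    rw [Real.sqrt_sq (by positivity)]]
  apply Real.sqrt_le_sqrt
  nlinarith [norm_nonneg u, norm_nonneg v, norm_nonneg w,
    mul_nonneg (norm_nonneg u) (norm_nonneg v),
    mul_nonneg (norm_nonneg u) (norm_nonneg w),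
    mul_nonneg (norm_nonneg v) (norm_nonneg w)]

lemma norm_fz (b c : ℕ) (x z : ℂ) : ‖fzC b c x z‖ = b * ‖z‖^(b-1) * ‖x‖^c := by
  simp [fzC, norm_mul, norm_pow]

lemma x_ne_zero {a b c d : ℕ} {x y z : ℂ} (ha : 0 < a) (hc : 0 < c) (hd : 0 < d)
    (h : inXC a b c d x y z) : x ≠ 0 := by
  intro hx
  rcases h with ⟨heq, hne⟩
  apply hne
  refine ⟨hx, ?_⟩
  have : y ^ a = 0 := by
    rw [heq, hx, zero_pow (by omega : c ≠ 0), zero_pow (by omega : d ≠ 0)]; ring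
  exact pow_eq_zero_iff (by omega : a ≠ 0) |>.1 this

lemma ratio_nonneg (a b c d : ℕ) (x y z : ℂ) :
    0 ≤ ‖fzC b c x z‖ / gradNormC a b c d x y z :=
  div_nonneg (norm_nonneg _) (nrm3_nonneg _ _ _)

lemma ratio_le_one (a b c d : ℕ) (x y z : ℂ) :
    ‖fzC b c x z‖ / gradNormC a b c d x y z ≤ 1 :=
  div_le_one_of_le₀ (le_nrm3_thd _ _ _) (nrm3_nonneg _ _ _)

lemma ratio_le_div {a b c d : ℕ} {x y z : ℂ} {A : ℝ} (hA : 0 < A)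
    (h : A ≤ gradNormC a b c d x y z) :
    ‖fzC b c x z‖ / gradNormC a b c d x y z ≤ ‖fzC b c x z‖ / A := by
  gcongr

lemma ratio_lower {a b c d : ℕ} {x y z : ℂ} {C : ℝ} (hC : 0 ≤ C)
    (hz : fzC b c x z ≠ 0)
    (h : ‖fxC b c d x z‖ + ‖fyC a y‖ ≤ C * ‖fzC b c x z‖) :
    1/(C+1) ≤ ‖fzC b c x z‖ / gradNormC a b c d x y z := by
  have hzpos : 0 < ‖fzC b c x z‖ := norm_pos_iff.2 hz
  have hnrm : gradNormC a b c d x y z ≤ (C+1) * ‖fzC b c x z‖ := by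
    calc gradNormC a b c d x y z ≤ ‖fxC b c d x z‖ + ‖fyC a y‖ + ‖fzC b c x z‖ :=
          nrm3_le_sum _ _ _
    _ ≤ C * ‖fzC b c x z‖ + ‖fzC b c x z‖ := by linarith
    _ = (C+1) * ‖fzC b c x z‖ := by ring
  have hpos : 0 < gradNormC a b c d x y z := lt_of_lt_of_le hzpos (le_nrm3_thd _ _ _)
  calc 1/(C+1) = ‖fzC b c x z‖ / ((C+1) * ‖fzC b c x z‖) := by
        rw [mul_comm, ← div_div, div_self hzpos.ne']
  _ ≤ ‖fzC b c x z‖ / gradNormC a b c d x y z := by gcongr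

lemma tendsto_of_pow {r : ℕ → ℝ} (h0 : ∀ n, 0 ≤ r n) {N : ℕ} (hN : 0 < N)
    (h : Tendsto (fun n => r n ^ N) atTop (nhds 0)) : Tendsto r atTop (nhds 0) := by
  have h2 := h.rpow_const (p := (N:ℝ)⁻¹) (Or.inr (by positivity))
  rw [Real.zero_rpow (by positivity)] at h2
  convert h2 using 2 with n
  rw [← Real.rpow_natCast (r n) N, ← Real.rpow_mul (h0 n)]
  rw [mul_inv_cancel₀ (by positivity), Real.rpow_one]

lemma tendsto_norms {x y z : ℕ → ℂ}
    (h : Tendsto (fun n => (x n, y n, z n)) atTop (nhds ((0:ℂ),(0:ℂ),(0:ℂ)))) :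
    Tendsto (fun n => ‖x n‖) atTop (nhds 0) ∧ Tendsto (fun n => ‖y n‖) atTop (nhds 0) ∧
      Tendsto (fun n => ‖z n‖) atTop (nhds 0) := by
  refine ⟨?_, ?_, ?_⟩
  · have h2 := (continuous_fst.tendsto ((0:ℂ),(0:ℂ),(0:ℂ))).comp h
    simpa using h2.norm
  · have h2 := ((continuous_fst.comp continuous_snd).tendsto ((0:ℂ),(0:ℂ),(0:ℂ))).comp h
    simpa using h2.norm
  · have h2 := ((continuous_snd.comp continuous_snd).tendsto ((0:ℂ),(0:ℂ),(0:ℂ))).comp h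
    simpa using h2.norm

lemma aReg_of_a_one (b c d : ℕ) (hb : 0 < b) (hc : 0 < c) (hd : 0 < d) : aRegC 1 b c d := by
  intro x y z hX hlim hgrad
  obtain ⟨hx, hy, hz⟩ := tendsto_norms hlim
  have hev : ∀ᶠ n in atTop, ‖z n‖ < 1 := hz.eventually (gt_mem_nhds one_pos)
  refine squeeze_zero' (g := fun n => (b:ℝ) * ‖x n‖^c)
    (Eventually.of_forall fun n => ratio_nonneg 1 b c d (x n) (y n) (z n))
    (hev.mono fun n hn => ?_) ?_
  · have h1 : (1:ℝ) ≤ gradNormC 1 b c d (x n) (y n) (z n) := by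
      have : ‖fyC 1 (y n)‖ = 1 := by simp [fyC]
      calc (1:ℝ) = ‖fyC 1 (y n)‖ := this.symm
      _ ≤ _ := le_nrm3_snd _ _ _
    calc ‖fzC b c (x n) (z n)‖ / gradNormC 1 b c d (x n) (y n) (z n)
        ≤ ‖fzC b c (x n) (z n)‖ / 1 := ratio_le_div one_pos h1
    _ = b * ‖z n‖^(b-1) * ‖x n‖^c := by rw [div_one, norm_fz]
    _ ≤ b * 1 * ‖x n‖^c := by
        apply mul_le_mul_of_nonneg_right _ (by positivity)
        apply mul_le_mul_of_nonneg_left _ (Nat.cast_nonneg b)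
        exact pow_le_one₀ (norm_nonneg _) hn.le
    _ = b * ‖x n‖^c := by ring
  · have := (hx.pow c).const_mul (b:ℝ)
    simpa [zero_pow hc.ne'] using this

lemma aReg_of_d_le_c (a b c d : ℕ) (ha : 0 < a) (hb : 0 < b) (hc : 0 < c) (hd : 0 < d)
    (hdc : d ≤ c) : aRegC a b c d := by
  intro x y z hX hlim hgrad
  obtain ⟨hx, hy, hz⟩ := tendsto_norms hlim
  set δ : ℝ := min 1 ((d:ℝ)/(2*c)) with hδdef
  have hδpos : 0 < δ := lt_min one_pos (by positivity)
  have hδ1 : δ ≤ 1 := min_le_left _ _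
  have hδd : (c:ℝ) * δ^b ≤ (d:ℝ)/2 := by
    have h1 : δ^b ≤ δ := pow_le_of_le_one hδpos.le hδ1 hb.ne'
    have h2 : δ ≤ (d:ℝ)/(2*c) := min_le_right _ _
    have hc' : (0:ℝ) < c := by positivity
    calc (c:ℝ) * δ^b ≤ (c:ℝ) * ((d:ℝ)/(2*c)) := by
          apply mul_le_mul_of_nonneg_left (h1.trans h2) hc'.le
    _ = (d:ℝ)/2 := by field_simp
  have hev : ∀ᶠ n in atTop, ‖z n‖ < δ ∧ ‖x n‖ < 1 :=
    (hz.eventually (gt_mem_nhds hδpos)).and (hx.eventually (gt_mem_nhds one_pos))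
  refine squeeze_zero' (g := fun n => (2*b/d : ℝ) * (‖z n‖^(b-1) * ‖x n‖^(c-d+1)))
    (Eventually.of_forall fun n => ratio_nonneg a b c d (x n) (y n) (z n))
    (hev.mono fun n hn => ?_) ?_
  · obtain ⟨hzn, hxn⟩ := hn
    have hXpos : 0 < ‖x n‖ := norm_pos_iff.2 (x_ne_zero ha hc hd (hX n))
    have hApos : 0 < (d:ℝ)/2 * ‖x n‖^(d-1) := by positivity
    -- lower bound on fx
    have hfx : (d:ℝ)/2 * ‖x n‖^(d-1) ≤ ‖fxC b c d (x n) (z n)‖ := by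
      have hrw : fxC b c d (x n) (z n)
          = -((c:ℂ) * (z n)^b * (x n)^(c-1) + (d:ℂ) * (x n)^(d-1)) := by
        rw [fxC]; ring
      have hnorm : ‖fxC b c d (x n) (z n)‖
          = ‖(c:ℂ) * (z n)^b * (x n)^(c-1) + (d:ℂ) * (x n)^(d-1)‖ := by
        rw [hrw, norm_neg]
      have hlow : ‖(d:ℂ) * (x n)^(d-1)‖ - ‖(c:ℂ) * (z n)^b * (x n)^(c-1)‖
          ≤ ‖(c:ℂ) * (z n)^b * (x n)^(c-1) + (d:ℂ) * (x n)^(d-1)‖ := by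
        have := norm_sub_norm_le ((d:ℂ) * (x n)^(d-1)) (-((c:ℂ) * (z n)^b * (x n)^(c-1)))
        simp only [norm_neg] at this
        calc ‖(d:ℂ) * (x n)^(d-1)‖ - ‖(c:ℂ) * (z n)^b * (x n)^(c-1)‖ ≤
            ‖(d:ℂ) * (x n)^(d-1) - -((c:ℂ) * (z n)^b * (x n)^(c-1))‖ := this
        _ = ‖(c:ℂ) * (z n)^b * (x n)^(c-1) + (d:ℂ) * (x n)^(d-1)‖ := by ring_nf
      have h1 : ‖(d:ℂ) * (x n)^(d-1)‖ = (d:ℝ) * ‖x n‖^(d-1) := by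
        simp [norm_mul, norm_pow]
      have h2 : ‖(c:ℂ) * (z n)^b * (x n)^(c-1)‖ = (c:ℝ) * ‖z n‖^b * ‖x n‖^(c-1) := by
        simp [norm_mul, norm_pow]
      have h3 : (c:ℝ) * ‖z n‖^b * ‖x n‖^(c-1) ≤ (d:ℝ)/2 * ‖x n‖^(d-1) := by
        have hXc : ‖x n‖^(c-1) ≤ ‖x n‖^(d-1) :=
          pow_le_pow_of_le_one hXpos.le hxn.le (by omega)
        calc (c:ℝ) * ‖z n‖^b * ‖x n‖^(c-1) ≤ (c:ℝ) * δ^b * ‖x n‖^(d-1) := by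
              apply mul_le_mul
              · apply mul_le_mul_of_nonneg_left _ (Nat.cast_nonneg c)
                exact pow_le_pow_left₀ (norm_nonneg _) hzn.le b
              · exact hXc
              · positivity
              · positivity
        _ ≤ (d:ℝ)/2 * ‖x n‖^(d-1) := by
              apply mul_le_mul_of_nonneg_right hδd (by positivity)
      rw [hnorm]
      calc (d:ℝ)/2 * ‖x n‖^(d-1) = (d:ℝ) * ‖x n‖^(d-1) - (d:ℝ)/2 * ‖x n‖^(d-1) := by ring
      _ ≤ ‖(d:ℂ) * (x n)^(d-1)‖ - ‖(c:ℂ) * (z n)^b * (x n)^(c-1)‖ := by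
          rw [h1, h2]; linarith
      _ ≤ _ := hlow
    have hA : (d:ℝ)/2 * ‖x n‖^(d-1) ≤ gradNormC a b c d (x n) (y n) (z n) :=
      hfx.trans (le_nrm3_fst _ _ _)
    calc ‖fzC b c (x n) (z n)‖ / gradNormC a b c d (x n) (y n) (z n)
        ≤ ‖fzC b c (x n) (z n)‖ / ((d:ℝ)/2 * ‖x n‖^(d-1)) := ratio_le_div hApos hA
    _ = (2*b/d) * (‖z n‖^(b-1) * ‖x n‖^(c-d+1)) := by
        rw [norm_fz]
        have hsplit : ‖x n‖^c = ‖x n‖^(c-d+1) * ‖x n‖^(d-1) := by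
          rw [← pow_add]; congr 1; omega
        rw [hsplit]
        have hd' : (d:ℝ) ≠ 0 := by positivity
        have hX' : ‖x n‖^(d-1) ≠ 0 := by positivity
        rw [show (b:ℝ) * ‖z n‖^(b-1) * (‖x n‖^(c-d+1) * ‖x n‖^(d-1))
            = ((b:ℝ) * ‖z n‖^(b-1) * ‖x n‖^(c-d+1)) * ‖x n‖^(d-1) by ring,
          show (d:ℝ)/2 * ‖x n‖^(d-1) = ((d:ℝ)/2) * ‖x n‖^(d-1) by ring,
          mul_div_mul_right _ _ hX']
        field_simp
  · have := ((hz.pow (b-1)).mul (hx.pow (c-d+1))).const_mul ((2*b/d : ℝ))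
    simpa [zero_pow (show c-d+1 ≠ 0 by omega)] using this

lemma norm_fy (a : ℕ) (y : ℂ) : ‖fyC a y‖ = a * ‖y‖^(a-1) := by
  simp [fyC, norm_mul, norm_pow]

lemma aReg_case3 (a b c d : ℕ) (ha : 0 < a) (hb : 0 < b) (hc : 0 < c) (hd : 0 < d)
    (hcd : c < d) (hdbc : d < b + c) (hkey : a*d < a*c + b*d) : aRegC a b c d := by
  obtain ⟨e, he⟩ : ∃ e, c + e = d := ⟨d - c, by omega⟩
  have he1 : 1 ≤ e := by omega
  have heb : e < b := by omega
  have hd'' : (c:ℤ) + e = d := by exact_mod_cast he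
  have hexp1 : e*(b-1) + b*c = b*(d-1) + (b-e) := by
    zify [show 1 ≤ b from hb, show 1 ≤ d from hd, show e ≤ b from heb.le]
    linear_combination (b:ℤ) * hd''
  have hkey' : (a:ℤ)*d < a*c + b*d := by exact_mod_cast hkey
  have hae : (a:ℤ)*e < b*d := by
    have h5 : (a:ℤ)*d = a*c + a*e := by rw [← hd'']; ring
    linarith
  have hqp : b*d*(a-1) < a*e*(b-1) + a*b*c := by
    zify [show 1 ≤ a from ha, show 1 ≤ b from hb]
    have h6 : (a:ℤ)*b*e + a*b*c = a*b*d := by rw [← hd'']; ring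
    nlinarith [hae, h6]
  have hexp3 : a*e*(b-1) + a*b*c = b*d*(a-1) + (a*e*(b-1) + a*b*c - b*d*(a-1)) := by omega
  set m₃ : ℕ := a*e*(b-1) + a*b*c - b*d*(a-1) with hm₃
  have hm₃1 : 1 ≤ m₃ := by omega
  set K : ℝ := 2*(d:ℝ)/c + 1 with hK
  have hKpos : (0:ℝ) < K := by positivity
  have hK1 : (1:ℝ) ≤ K := le_add_of_nonneg_left (by positivity)
  have hcK : (d:ℝ) ≤ c/2*K := by
    have h7 : (c:ℝ)/2*K = d + c/2 := by
      rw [hK]; field_simp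
    have : (0:ℝ) < c := by positivity
    linarith
  set N : ℕ := a*b*e with hN
  set C₁ : ℝ := (b:ℝ)^b * K^(b-1) * (2/(e:ℝ))^b with hC₁
  set C₂ : ℝ := (2*(b:ℝ)/c)^e with hC₂
  set C₃ : ℝ := ((b:ℝ)^(a*b) * K^(a*(b-1)) * (2*(c:ℝ)/e)^(b*(a-1))) / (a:ℝ)^(a*b) with hC₃
  have hC₁pos : 0 < C₁ := by positivity
  have hC₂pos : 0 < C₂ := by positivity
  have hC₃pos : 0 < C₃ := by positivity
  intro x y z hX hlim hgrad
  obtain ⟨hx, hy, hz⟩ := tendsto_norms hlim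
  apply tendsto_of_pow (fun n => ratio_nonneg a b c d (x n) (y n) (z n))
    (show 0 < N by positivity)
  refine squeeze_zero'
    (g := fun n => C₁ * ‖x n‖^(b-e) + C₂ * ‖z n‖^(b-e) + C₃ * ‖x n‖^m₃)
    (Eventually.of_forall fun n => pow_nonneg (ratio_nonneg a b c d (x n) (y n) (z n)) N)
    (Eventually.of_forall ?_) ?_
  swap
  · -- the bound tends to zero
    have t1 := (hx.pow (b-e)).const_mul C₁
    have t2 := (hz.pow (b-e)).const_mul C₂
    have t3 := (hx.pow m₃).const_mul C₃
    have := (t1.add t2).add t3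
    simpa [zero_pow (show b-e ≠ 0 by omega), zero_pow (show m₃ ≠ 0 by omega)] using this
  -- the pointwise bound
  intro n
  show (‖fzC b c (x n) (z n)‖ / gradNormC a b c d (x n) (y n) (z n))^N
    ≤ C₁ * ‖x n‖^(b-e) + C₂ * ‖z n‖^(b-e) + C₃ * ‖x n‖^m₃
  have hx0 : x n ≠ 0 := x_ne_zero ha hc hd (hX n)
  have hXpos : 0 < ‖x n‖ := norm_pos_iff.2 hx0
  have hr0 : 0 ≤ ‖fzC b c (x n) (z n)‖ / gradNormC a b c d (x n) (y n) (z n) :=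
    ratio_nonneg a b c d (x n) (y n) (z n)
  have hr1 : ‖fzC b c (x n) (z n)‖ / gradNormC a b c d (x n) (y n) (z n) ≤ 1 :=
    ratio_le_one a b c d (x n) (y n) (z n)
  have hfznorm : ‖fzC b c (x n) (z n)‖ = b * ‖z n‖^(b-1) * ‖x n‖^c := norm_fz b c (x n) (z n)
  have hterm1 : 0 ≤ C₁ * ‖x n‖^(b-e) := by positivity
  have hterm2 : 0 ≤ C₂ * ‖z n‖^(b-e) := by positivity
  have hterm3 : 0 ≤ C₃ * ‖x n‖^m₃ := by positivity
  by_cases h2 : K * ‖x n‖^e < ‖z n‖^b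
  · -- regime (ii): z dominates
    have hZpos : 0 < ‖z n‖ := by
      have h0 : 0 < ‖z n‖^b := lt_of_le_of_lt (by positivity) h2
      by_contra hcon
      push_neg at hcon
      have hz0 : ‖z n‖ = 0 := le_antisymm hcon (norm_nonneg _)
      rw [hz0, zero_pow (show b ≠ 0 by omega)] at h0
      exact lt_irrefl _ h0
    have hXe : ‖x n‖^e ≤ ‖z n‖^b := by
      calc ‖x n‖^e = 1 * ‖x n‖^e := (one_mul _).symm
      _ ≤ K * ‖x n‖^e := mul_le_mul_of_nonneg_right hK1 (by positivity)
      _ ≤ ‖z n‖^b := h2.le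
    -- lower bound for fx
    have hdXe : (d:ℝ) * ‖x n‖^e ≤ c/2 * ‖z n‖^b := by
      calc (d:ℝ) * ‖x n‖^e ≤ (c/2*K) * ‖x n‖^e := by
            apply mul_le_mul_of_nonneg_right hcK (by positivity)
      _ = c/2 * (K * ‖x n‖^e) := by ring
      _ ≤ c/2 * ‖z n‖^b := by
            apply mul_le_mul_of_nonneg_left h2.le (by positivity)
    have hfx : (c:ℝ)/2 * ‖x n‖^(c-1) * ‖z n‖^b ≤ ‖fxC b c d (x n) (z n)‖ := by
      have hrw : fxC b c d (x n) (z n)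
          = -((c:ℂ) * (z n)^b * (x n)^(c-1) + (d:ℂ) * (x n)^(d-1)) := by
        rw [fxC]; ring
      have hnorm : ‖fxC b c d (x n) (z n)‖
          = ‖(c:ℂ) * (z n)^b * (x n)^(c-1) + (d:ℂ) * (x n)^(d-1)‖ := by
        rw [hrw, norm_neg]
      have hlow : ‖(c:ℂ) * (z n)^b * (x n)^(c-1)‖ - ‖(d:ℂ) * (x n)^(d-1)‖
          ≤ ‖(c:ℂ) * (z n)^b * (x n)^(c-1) + (d:ℂ) * (x n)^(d-1)‖ := by
        have h8 := norm_sub_norm_le ((c:ℂ) * (z n)^b * (x n)^(c-1)) (-((d:ℂ) * (x n)^(d-1)))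
        simp only [norm_neg] at h8
        calc ‖(c:ℂ) * (z n)^b * (x n)^(c-1)‖ - ‖(d:ℂ) * (x n)^(d-1)‖
            ≤ ‖(c:ℂ) * (z n)^b * (x n)^(c-1) - -((d:ℂ) * (x n)^(d-1))‖ := h8
        _ = ‖(c:ℂ) * (z n)^b * (x n)^(c-1) + (d:ℂ) * (x n)^(d-1)‖ := by ring_nf
      have h9 : ‖(c:ℂ) * (z n)^b * (x n)^(c-1)‖ = (c:ℝ) * ‖z n‖^b * ‖x n‖^(c-1) := by
        simp [norm_mul, norm_pow]
      have h10 : ‖(d:ℂ) * (x n)^(d-1)‖ = (d:ℝ) * ‖x n‖^(d-1) := by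
        simp [norm_mul, norm_pow]
      have h11 : (d:ℝ) * ‖x n‖^(d-1) ≤ c/2 * ‖z n‖^b * ‖x n‖^(c-1) := by
        have hsplit : ‖x n‖^(d-1) = ‖x n‖^e * ‖x n‖^(c-1) := by
          rw [← pow_add]; congr 1; omega
        calc (d:ℝ) * ‖x n‖^(d-1) = ((d:ℝ) * ‖x n‖^e) * ‖x n‖^(c-1) := by rw [hsplit]; ring
        _ ≤ (c/2 * ‖z n‖^b) * ‖x n‖^(c-1) := by
              apply mul_le_mul_of_nonneg_right hdXe (by positivity)
        _ = c/2 * ‖z n‖^b * ‖x n‖^(c-1) := by ring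
      rw [hnorm]
      calc (c:ℝ)/2 * ‖x n‖^(c-1) * ‖z n‖^b
          = (c:ℝ) * ‖z n‖^b * ‖x n‖^(c-1) - c/2 * ‖z n‖^b * ‖x n‖^(c-1) := by ring
      _ ≤ ‖(c:ℂ) * (z n)^b * (x n)^(c-1)‖ - ‖(d:ℂ) * (x n)^(d-1)‖ := by
          rw [h9, h10]; linarith
      _ ≤ _ := hlow
    have hApos : (0:ℝ) < c/2 * ‖x n‖^(c-1) * ‖z n‖^b := by positivity
    have hA : (c:ℝ)/2 * ‖x n‖^(c-1) * ‖z n‖^b ≤ gradNormC a b c d (x n) (y n) (z n) :=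
      hfx.trans (le_nrm3_fst _ _ _)
    have hEq : ‖fzC b c (x n) (z n)‖ / ((c:ℝ)/2 * ‖x n‖^(c-1) * ‖z n‖^b)
        = (2*b/c) * (‖x n‖ / ‖z n‖) := by
      have hne : ‖x n‖^(c-1) * ‖z n‖^(b-1) ≠ 0 := by positivity
      have hnum : ‖fzC b c (x n) (z n)‖
          = ((b:ℝ) * ‖x n‖) * (‖x n‖^(c-1) * ‖z n‖^(b-1)) := by
        rw [hfznorm, show ‖x n‖^c = ‖x n‖^(c-1) * ‖x n‖ by
          rw [← pow_succ]; congr 1; omega]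
        ring
      have hden : (c:ℝ)/2 * ‖x n‖^(c-1) * ‖z n‖^b
          = ((c:ℝ)/2 * ‖z n‖) * (‖x n‖^(c-1) * ‖z n‖^(b-1)) := by
        rw [show ‖z n‖^b = ‖z n‖^(b-1) * ‖z n‖ by rw [← pow_succ]; congr 1; omega]
        ring
      rw [hnum, hden, mul_div_mul_right _ _ hne]
      have hc' : (c:ℝ) ≠ 0 := by positivity
      have hz' : ‖z n‖ ≠ 0 := hZpos.ne'
      field_simp
    calc (‖fzC b c (x n) (z n)‖ / gradNormC a b c d (x n) (y n) (z n))^N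
        ≤ (‖fzC b c (x n) (z n)‖ / gradNormC a b c d (x n) (y n) (z n))^e :=
          pow_le_pow_of_le_one hr0 hr1 (by
            rw [hN]; exact Nat.le_mul_of_pos_left e (by positivity))
    _ ≤ ((2*(b:ℝ)/c) * (‖x n‖ / ‖z n‖))^e := by
          apply pow_le_pow_left₀ hr0
          rw [← hEq]
          exact ratio_le_div hApos hA
    _ = C₂ * (‖x n‖^e / ‖z n‖^e) := by rw [hC₂, mul_pow, div_pow (‖x n‖)]
    _ ≤ C₂ * (‖z n‖^b / ‖z n‖^e) := by
          apply mul_le_mul_of_nonneg_left _ hC₂pos.le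
          gcongr
    _ = C₂ * ‖z n‖^(b-e) := by
          have hq : ‖z n‖^b / ‖z n‖^e = ‖z n‖^(b-e) := by
            rw [show ‖z n‖^b = ‖z n‖^(b-e) * ‖z n‖^e from by rw [← pow_add]; congr 1; omega]
            exact mul_div_cancel_right₀ _ (pow_pos hZpos e).ne'
          rw [hq]
    _ ≤ _ := by linarith
  · -- regime (i)
    push_neg at h2
    have hZb : ‖z n‖^b ≤ K * ‖x n‖^e := h2
    by_cases h3 : (e:ℝ)/2 * ‖x n‖^e ≤ ‖(c:ℂ) * (z n)^b + (d:ℂ) * (x n)^e‖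
    · -- regime (i.a) : no cancellation in fx
      have hrw : fxC b c d (x n) (z n)
          = -((x n)^(c-1) * ((c:ℂ) * (z n)^b + (d:ℂ) * (x n)^e)) := by
        rw [fxC, show (x n)^(d-1) = (x n)^(c-1) * (x n)^e by rw [← pow_add]; congr 1; omega]
        ring
      have hfx : (e:ℝ)/2 * ‖x n‖^(d-1) ≤ ‖fxC b c d (x n) (z n)‖ := by
        rw [hrw, norm_neg, norm_mul, norm_pow]
        calc (e:ℝ)/2 * ‖x n‖^(d-1) = ‖x n‖^(c-1) * ((e:ℝ)/2 * ‖x n‖^e) := by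
              rw [show ‖x n‖^(d-1) = ‖x n‖^(c-1) * ‖x n‖^e by rw [← pow_add]; congr 1; omega]
              ring
        _ ≤ ‖x n‖^(c-1) * ‖(c:ℂ) * (z n)^b + (d:ℂ) * (x n)^e‖ := by
              apply mul_le_mul_of_nonneg_left h3 (by positivity)
      have hApos : (0:ℝ) < (e:ℝ)/2 * ‖x n‖^(d-1) := by positivity
      have hA : (e:ℝ)/2 * ‖x n‖^(d-1) ≤ gradNormC a b c d (x n) (y n) (z n) :=
        hfx.trans (le_nrm3_fst _ _ _)
      have hnum : ‖fzC b c (x n) (z n)‖^b ≤ ((b:ℝ)^b * K^(b-1)) * (‖x n‖^(b*(d-1)) * ‖x n‖^(b-e)) := by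
        rw [hfznorm]
        calc ((b:ℝ) * ‖z n‖^(b-1) * ‖x n‖^c)^b
            = (b:ℝ)^b * (‖z n‖^b)^(b-1) * ‖x n‖^(b*c) := by
              rw [mul_pow, mul_pow, ← pow_mul, ← pow_mul, mul_comm (b-1) b, mul_comm c b,
                pow_mul]
        _ ≤ (b:ℝ)^b * (K * ‖x n‖^e)^(b-1) * ‖x n‖^(b*c) := by
              apply mul_le_mul_of_nonneg_right _ (by positivity)
              apply mul_le_mul_of_nonneg_left _ (by positivity)
              exact pow_le_pow_left₀ (by positivity) hZb (b-1)
        _ = ((b:ℝ)^b * K^(b-1)) * ‖x n‖^(e*(b-1) + b*c) := by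
              rw [mul_pow, ← pow_mul, pow_add]; ring
        _ = ((b:ℝ)^b * K^(b-1)) * (‖x n‖^(b*(d-1)) * ‖x n‖^(b-e)) := by
              rw [hexp1, pow_add]
      have hden : ((e:ℝ)/2)^b * ‖x n‖^(b*(d-1)) ≤ ((e:ℝ)/2 * ‖x n‖^(d-1))^b :=
        le_of_eq (by rw [mul_pow, ← pow_mul, mul_comm b (d-1)])
      calc (‖fzC b c (x n) (z n)‖ / gradNormC a b c d (x n) (y n) (z n))^N
          ≤ (‖fzC b c (x n) (z n)‖ / gradNormC a b c d (x n) (y n) (z n))^b :=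
            pow_le_pow_of_le_one hr0 hr1 (by
              rw [hN]
              calc b = 1*b*1 := by ring
              _ ≤ a*b*e := Nat.mul_le_mul (Nat.mul_le_mul ha (le_refl b)) he1)
      _ ≤ (‖fzC b c (x n) (z n)‖ / ((e:ℝ)/2 * ‖x n‖^(d-1)))^b := by
            apply pow_le_pow_left₀ hr0
            exact ratio_le_div hApos hA
      _ = ‖fzC b c (x n) (z n)‖^b / ((e:ℝ)/2 * ‖x n‖^(d-1))^b := div_pow _ _ _
      _ ≤ (((b:ℝ)^b * K^(b-1)) * (‖x n‖^(b*(d-1)) * ‖x n‖^(b-e)))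
            / (((e:ℝ)/2)^b * ‖x n‖^(b*(d-1))) :=
            div_le_div₀ (by positivity) hnum (by positivity) hden
      _ = C₁ * ‖x n‖^(b-e) := by
            rw [show ((b:ℝ)^b * K^(b-1)) * (‖x n‖^(b*(d-1)) * ‖x n‖^(b-e))
              = (((b:ℝ)^b * K^(b-1)) * ‖x n‖^(b-e)) * ‖x n‖^(b*(d-1)) by ring,
              show ((e:ℝ)/2)^b * ‖x n‖^(b*(d-1)) = (((e:ℝ)/2)^b) * ‖x n‖^(b*(d-1)) by ring,
              mul_div_mul_right _ _ (by positivity : ‖x n‖^(b*(d-1)) ≠ 0)]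
            rw [hC₁]
            have : ((e:ℝ)/2)^b ≠ 0 := by positivity
            field_simp
            rw [← mul_pow, div_mul_div_comm, mul_comm (e:ℝ) 2, div_self (by positivity), one_pow]
      _ ≤ _ := by linarith
    · -- regime (i.b) : cancellation in fx, use fy
      push_neg at h3
      have hyz : (e:ℝ)/(2*c) * ‖x n‖^e ≤ ‖(z n)^b + (x n)^e‖ := by
        have hid : (c:ℂ) * ((z n)^b + (x n)^e)
            = ((c:ℂ) * (z n)^b + (d:ℂ) * (x n)^e) - (e:ℂ) * (x n)^e := by
          have : (d:ℂ) = (c:ℂ) + (e:ℂ) := by exact_mod_cast congrArg (Nat.cast : ℕ → ℂ) he.symm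
          rw [this]; ring
        have hlow : ‖(e:ℂ) * (x n)^e‖ - ‖(c:ℂ) * (z n)^b + (d:ℂ) * (x n)^e‖
            ≤ ‖(c:ℂ) * ((z n)^b + (x n)^e)‖ := by
          rw [hid]
          have h8 := norm_sub_norm_le ((e:ℂ) * (x n)^e)
            ((c:ℂ) * (z n)^b + (d:ℂ) * (x n)^e)
          calc ‖(e:ℂ) * (x n)^e‖ - ‖(c:ℂ) * (z n)^b + (d:ℂ) * (x n)^e‖
              ≤ ‖(e:ℂ) * (x n)^e - ((c:ℂ) * (z n)^b + (d:ℂ) * (x n)^e)‖ := h8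
          _ = ‖((c:ℂ) * (z n)^b + (d:ℂ) * (x n)^e) - (e:ℂ) * (x n)^e‖ := by
              rw [← norm_neg]; congr 1; ring
        have h9 : ‖(e:ℂ) * (x n)^e‖ = (e:ℝ) * ‖x n‖^e := by simp [norm_mul, norm_pow]
        have h10 : ‖(c:ℂ) * ((z n)^b + (x n)^e)‖ = (c:ℝ) * ‖(z n)^b + (x n)^e‖ := by
          simp [norm_mul]
        have h11 : (e:ℝ)/2 * ‖x n‖^e ≤ (c:ℝ) * ‖(z n)^b + (x n)^e‖ := by
          rw [← h10]
          calc (e:ℝ)/2 * ‖x n‖^e = (e:ℝ) * ‖x n‖^e - (e:ℝ)/2 * ‖x n‖^e := by ring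
          _ ≤ ‖(e:ℂ) * (x n)^e‖ - ‖(c:ℂ) * (z n)^b + (d:ℂ) * (x n)^e‖ := by
              rw [h9]; linarith
          _ ≤ _ := hlow
        have hc' : (0:ℝ) < c := by positivity
        rw [div_mul_eq_mul_div, div_le_iff₀ (by positivity)]
        calc (e:ℝ) * ‖x n‖^e = 2 * ((e:ℝ)/2 * ‖x n‖^e) := by ring
        _ ≤ 2 * ((c:ℝ) * ‖(z n)^b + (x n)^e‖) := by linarith
        _ = ‖(z n)^b + (x n)^e‖ * (2*c) := by ring
      have hY : (e:ℝ)/(2*c) * ‖x n‖^d ≤ ‖y n‖^a := by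
        have hyeq : (y n)^a = (x n)^c * ((z n)^b + (x n)^e) := by
          rw [(hX n).1, show (x n)^d = (x n)^c * (x n)^e by rw [← pow_add, he]]
          ring
        calc (e:ℝ)/(2*c) * ‖x n‖^d = ‖x n‖^c * ((e:ℝ)/(2*c) * ‖x n‖^e) := by
              rw [show ‖x n‖^d = ‖x n‖^c * ‖x n‖^e by rw [← pow_add, he]]
              ring
        _ ≤ ‖x n‖^c * ‖(z n)^b + (x n)^e‖ := by
              apply mul_le_mul_of_nonneg_left hyz (by positivity)
        _ = ‖y n‖^a := by rw [← norm_pow, ← norm_pow, ← norm_mul, ← hyeq]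
      have hYpos : 0 < ‖y n‖ := by
        have h0 : 0 < ‖y n‖^a := lt_of_lt_of_le (by positivity) hY
        by_contra hcon
        push_neg at hcon
        have hy0 : ‖y n‖ = 0 := le_antisymm hcon (norm_nonneg _)
        rw [hy0, zero_pow (show a ≠ 0 by omega)] at h0
        exact lt_irrefl _ h0
      have hApos : (0:ℝ) < a * ‖y n‖^(a-1) := by positivity
      have hA : (a:ℝ) * ‖y n‖^(a-1) ≤ gradNormC a b c d (x n) (y n) (z n) := by
        rw [← norm_fy a (y n)]
        exact le_nrm3_snd _ _ _
      have hnum : ‖fzC b c (x n) (z n)‖^(a*b)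
          ≤ ((b:ℝ)^(a*b) * K^(a*(b-1))) * (‖x n‖^(b*d*(a-1)) * ‖x n‖^m₃) := by
        rw [hfznorm]
        calc ((b:ℝ) * ‖z n‖^(b-1) * ‖x n‖^c)^(a*b)
            = (b:ℝ)^(a*b) * (‖z n‖^b)^(a*(b-1)) * ‖x n‖^(a*b*c) := by
              rw [mul_pow, mul_pow, ← pow_mul, ← pow_mul,
                show (b-1)*(a*b) = b*(a*(b-1)) from by ring, show c*(a*b) = a*b*c from by ring,
                pow_mul (‖z n‖) b (a*(b-1))]
        _ ≤ (b:ℝ)^(a*b) * (K * ‖x n‖^e)^(a*(b-1)) * ‖x n‖^(a*b*c) := by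
              apply mul_le_mul_of_nonneg_right _ (by positivity)
              apply mul_le_mul_of_nonneg_left _ (by positivity)
              exact pow_le_pow_left₀ (by positivity) hZb (a*(b-1))
        _ = ((b:ℝ)^(a*b) * K^(a*(b-1))) * ‖x n‖^(a*e*(b-1) + a*b*c) := by
              rw [mul_pow, ← pow_mul, pow_add]
              ring_nf
        _ = ((b:ℝ)^(a*b) * K^(a*(b-1))) * (‖x n‖^(b*d*(a-1)) * ‖x n‖^m₃) := by
              rw [hexp3, pow_add]
      have hden : ((a:ℝ)^(a*b) * ((e:ℝ)/(2*c))^(b*(a-1))) * ‖x n‖^(b*d*(a-1))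
          ≤ ((a:ℝ) * ‖y n‖^(a-1))^(a*b) := by
        calc ((a:ℝ)^(a*b) * ((e:ℝ)/(2*c))^(b*(a-1))) * ‖x n‖^(b*d*(a-1))
            = (a:ℝ)^(a*b) * (((e:ℝ)/(2*c) * ‖x n‖^d)^(b*(a-1))) := by
              rw [mul_pow, ← pow_mul]
              ring_nf
        _ ≤ (a:ℝ)^(a*b) * ((‖y n‖^a)^(b*(a-1))) := by
              apply mul_le_mul_of_nonneg_left _ (by positivity)
              exact pow_le_pow_left₀ (by positivity) hY (b*(a-1))
        _ = ((a:ℝ) * ‖y n‖^(a-1))^(a*b) := by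
              rw [mul_pow, ← pow_mul, ← pow_mul]
              congr 2
              ring
      calc (‖fzC b c (x n) (z n)‖ / gradNormC a b c d (x n) (y n) (z n))^N
          ≤ (‖fzC b c (x n) (z n)‖ / gradNormC a b c d (x n) (y n) (z n))^(a*b) :=
            pow_le_pow_of_le_one hr0 hr1 (by
              rw [hN]; exact Nat.le_mul_of_pos_right (a*b) he1)
      _ ≤ (‖fzC b c (x n) (z n)‖ / ((a:ℝ) * ‖y n‖^(a-1)))^(a*b) := by
            apply pow_le_pow_left₀ hr0
            exact ratio_le_div hApos hA
      _ = ‖fzC b c (x n) (z n)‖^(a*b) / ((a:ℝ) * ‖y n‖^(a-1))^(a*b) := div_pow _ _ _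
      _ ≤ (((b:ℝ)^(a*b) * K^(a*(b-1))) * (‖x n‖^(b*d*(a-1)) * ‖x n‖^m₃))
            / (((a:ℝ)^(a*b) * ((e:ℝ)/(2*c))^(b*(a-1))) * ‖x n‖^(b*d*(a-1))) :=
            div_le_div₀ (by positivity) hnum (by positivity) hden
      _ = C₃ * ‖x n‖^m₃ := by
            rw [show ((b:ℝ)^(a*b) * K^(a*(b-1))) * (‖x n‖^(b*d*(a-1)) * ‖x n‖^m₃)
              = (((b:ℝ)^(a*b) * K^(a*(b-1))) * ‖x n‖^m₃) * ‖x n‖^(b*d*(a-1)) by ring,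
              mul_div_mul_right _ _ (by positivity : ‖x n‖^(b*d*(a-1)) ≠ 0)]
            rw [hC₃]
            have h20 : ((a:ℝ)^(a*b) * ((e:ℝ)/(2*c))^(b*(a-1))) ≠ 0 := by positivity
            have h21 : ((e:ℝ)/(2*c))^(b*(a-1)) ≠ 0 := by positivity
            have h22 : (2*(c:ℝ)/e)^(b*(a-1)) = (((e:ℝ)/(2*c))^(b*(a-1)))⁻¹ := by
              rw [← inv_pow]
              congr 1
              rw [inv_div]
            rw [h22]
            field_simp
      _ ≤ _ := by linarith

lemma s_pos (n : ℕ) : (0:ℝ) < 1/(n+1) := by positivity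

lemma s_le_one (n : ℕ) : (1:ℝ)/(n+1) ≤ 1 := by
  rw [div_le_one (by positivity)]
  linarith [Nat.cast_nonneg (α := ℝ) n]

lemma t_ne (n : ℕ) : (((1:ℝ)/(n+1) : ℝ) : ℂ) ≠ 0 :=
  Complex.ofReal_ne_zero.2 (s_pos n).ne'

lemma t_norm (n : ℕ) : ‖(((1:ℝ)/(n+1) : ℝ) : ℂ)‖ = 1/(n+1:ℝ) := by
  rw [Complex.norm_real, Real.norm_eq_abs, abs_of_pos (s_pos n)]

lemma t_tendsto (k : ℕ) (hk : 0 < k) :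
    Tendsto (fun n : ℕ => (((1:ℝ)/(n+1) : ℝ) : ℂ)^k) atTop (nhds 0) := by
  have h : Tendsto (fun n : ℕ => (((1:ℝ)/(n+1) : ℝ) : ℂ)) atTop (nhds 0) := by
    have h1 : Tendsto (fun n : ℕ => (1:ℝ)/((n:ℝ)+1)) atTop (nhds 0) := tendsto_one_div_add_atTop_nhds_zero_nat
    have h2 : Tendsto (fun n : ℕ => (((1:ℝ)/(n+1) : ℝ) : ℂ)) atTop (nhds ((0:ℝ):ℂ)) :=
      (Complex.continuous_ofReal.tendsto 0).comp h1
    simpa using h2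
  have := h.pow k
  simpa [zero_pow hk.ne'] using this

lemma zeta_pow (b : ℕ) (hb : 0 < b) : (Complex.exp ((Real.pi / b : ℝ) * Complex.I))^b = -1 := by
  have hb' : (b:ℂ) ≠ 0 := Nat.cast_ne_zero.2 hb.ne'
  rw [← Complex.exp_nat_mul]
  rw [show (b:ℂ) * ((Real.pi / b : ℝ) * Complex.I) = (Real.pi : ℂ) * Complex.I by
    push_cast; field_simp]
  exact Complex.exp_pi_mul_I

lemma zeta_norm (b : ℕ) : ‖Complex.exp ((Real.pi / b : ℝ) * Complex.I)‖ = 1 := by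
  rw [Complex.norm_exp_ofReal_mul_I]

lemma not_aReg_1 (a b c d : ℕ) (ha : 2 ≤ a) (hb : 0 < b) (hc : 0 < c) (hd : 0 < d)
    (hcd : c < d) (hbc : b + c ≤ d) : ¬ aRegC a b c d := by
  intro hreg
  set ζ : ℂ := Complex.exp ((Real.pi / b : ℝ) * Complex.I) with hζdef
  have hζb : ζ^b = -1 := zeta_pow b hb
  have hζnorm : ‖ζ‖ = 1 := zeta_norm b
  set t : ℕ → ℂ := fun n => (((1:ℝ)/(n+1) : ℝ) : ℂ) with htdef
  set x : ℕ → ℂ := fun n => (t n)^b with hxdef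
  set y : ℕ → ℂ := fun n => 0 with hydef
  set z : ℕ → ℂ := fun n => ζ * (t n)^(d-c) with hzdef
  have hxne : ∀ n, x n ≠ 0 := fun n => pow_ne_zero _ (t_ne n)
  have hzero : ∀ n, (z n)^b * (x n)^c + (x n)^d = 0 := by
    intro n
    have hE : (d-c)*b + b*c = b*d := by
      rw [mul_comm b c, ← Nat.add_mul, Nat.sub_add_cancel hcd.le, mul_comm]
    rw [hzdef, hxdef]
    simp only [mul_pow, ← pow_mul, hζb]
    calc -1 * (t n)^((d-c)*b) * (t n)^(b*c) + (t n)^(b*d)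
        = -((t n)^((d-c)*b + b*c)) + (t n)^(b*d) := by rw [pow_add]; ring
    _ = 0 := by rw [hE]; ring
  have hX : ∀ n, inXC a b c d (x n) (y n) (z n) := by
    intro n
    constructor
    · rw [hydef]
      simp only
      rw [zero_pow (show a ≠ 0 by omega), hzero n]
    · rintro ⟨h1, -⟩
      exact hxne n h1
  have hfx : ∀ n, fxC b c d (x n) (z n) = ((c:ℂ) - d) * (t n)^(b*(d-1)) := by
    intro n
    have hE : b*(d-c) + b*(c-1) = b*(d-1) := by
      rw [← Nat.mul_add]; congr 1; omega
    rw [fxC, hzdef, hxdef]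
    simp only [mul_pow, ← pow_mul, hζb]
    calc -(c:ℂ) * (-1 * (t n)^((d-c)*b)) * (t n)^(b*(c-1)) - (d:ℂ) * (t n)^(b*(d-1))
        = (c:ℂ) * ((t n)^(b*(d-c)) * (t n)^(b*(c-1))) - (d:ℂ) * (t n)^(b*(d-1)) := by
          rw [show (d-c)*b = b*(d-c) by ring]; ring
    _ = (c:ℂ) * (t n)^(b*(d-1)) - (d:ℂ) * (t n)^(b*(d-1)) := by rw [← pow_add, hE]
    _ = ((c:ℂ) - d) * (t n)^(b*(d-1)) := by ring
  have hcdC : (c:ℂ) - d ≠ 0 := by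
    intro h
    have : (c:ℂ) = d := by linear_combination h
    have : c = d := by exact_mod_cast this
    omega
  have hgrad : ∀ n, gradNeC a b c d (x n) (y n) (z n) := by
    intro n
    rintro ⟨h1, -, -⟩
    rw [hfx n] at h1
    exact (mul_ne_zero hcdC (pow_ne_zero _ (t_ne n))) h1
  have hlim : Tendsto (fun n => (x n, y n, z n)) atTop (nhds ((0:ℂ),(0:ℂ),(0:ℂ))) := by
    have hxl : Tendsto x atTop (nhds 0) := t_tendsto b hb
    have hyl : Tendsto y atTop (nhds 0) := tendsto_const_nhds
    have hzl : Tendsto z atTop (nhds 0) := by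
      have h3 := (t_tendsto (d-c) (by omega : 0 < d - c)).const_mul ζ
      rw [mul_zero] at h3
      exact h3
    exact hxl.prodMk_nhds (hyl.prodMk_nhds hzl)
  have htend := hreg x y z hX hlim hgrad
  -- lower bound for the ratio
  set C : ℝ := ((d:ℝ)-c)/b with hCdef
  have hC0 : 0 ≤ C := by
    apply div_nonneg _ (by positivity)
    have : (c:ℝ) < d := by exact_mod_cast hcd
    linarith
  have hfz : ∀ n, fzC b c (x n) (z n) = -(b:ℂ) * ζ^(b-1) * (t n)^((d-c)*(b-1) + b*c) := by
    intro n
    rw [fzC, hzdef, hxdef]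
    simp only [mul_pow, ← pow_mul]
    rw [pow_add]
    ring
  have hfzne : ∀ n, fzC b c (x n) (z n) ≠ 0 := by
    intro n
    rw [hfz n]
    exact mul_ne_zero (mul_ne_zero (by
      simpa using (show (b:ℂ) ≠ 0 from Nat.cast_ne_zero.2 hb.ne')) (pow_ne_zero _ (Complex.exp_ne_zero _)))
      (pow_ne_zero _ (t_ne n))
  have hfznorm : ∀ n, ‖fzC b c (x n) (z n)‖ = b * (1/(n+1:ℝ))^((d-c)*(b-1) + b*c) := by
    intro n
    rw [hfz n]
    simp only [htdef]
    rw [norm_mul, norm_mul, norm_pow, norm_pow, t_norm, norm_neg, hζnorm, one_pow, mul_one]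
    congr 1
    simp
  have hfxnorm : ∀ n, ‖fxC b c d (x n) (z n)‖ = ((d:ℝ)-c) * (1/(n+1:ℝ))^(b*(d-1)) := by
    intro n
    rw [hfx n]
    simp only [htdef]
    rw [norm_mul, norm_pow, t_norm]
    congr 1
    rw [show (c:ℂ) - d = (((c:ℝ) - d : ℝ) : ℂ) by push_cast; ring]
    rw [Complex.norm_real, Real.norm_eq_abs, abs_of_neg (by
      have : (c:ℝ) < d := by exact_mod_cast hcd
      linarith)]
    ring
  have hfynorm : ∀ n, ‖fyC a (y n)‖ = 0 := by
    intro n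
    rw [hydef]
    simp [fyC, zero_pow (show a - 1 ≠ 0 by omega)]
  have hEe : (d-c)*(b-1) + b*c ≤ b*(d-1) := by
    zify [show c ≤ d from hcd.le, show 1 ≤ b from hb, show 1 ≤ d from hd]
    have hbc' : (b:ℤ) + c ≤ d := by exact_mod_cast hbc
    nlinarith [hbc']
  have hle : ∀ n, ‖fxC b c d (x n) (z n)‖ + ‖fyC a (y n)‖ ≤ C * ‖fzC b c (x n) (z n)‖ := by
    intro n
    rw [hfxnorm n, hfynorm n, hfznorm n, hCdef]
    have hb' : (b:ℝ) ≠ 0 := by positivity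
    have hpow : (1/(n+1:ℝ))^(b*(d-1)) ≤ (1/(n+1:ℝ))^((d-c)*(b-1) + b*c) :=
      pow_le_pow_of_le_one (s_pos n).le (s_le_one n) hEe
    have hdc' : (0:ℝ) ≤ (d:ℝ) - c := by
      have : (c:ℝ) < d := by exact_mod_cast hcd
      linarith
    calc ((d:ℝ)-c) * (1/(n+1:ℝ))^(b*(d-1)) + 0
        ≤ ((d:ℝ)-c) * (1/(n+1:ℝ))^((d-c)*(b-1) + b*c) := by
          rw [add_zero]
          exact mul_le_mul_of_nonneg_left hpow hdc'
    _ = ((d:ℝ)-c)/b * (b * (1/(n+1:ℝ))^((d-c)*(b-1) + b*c)) := by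
          field_simp
  have hlow : ∀ n, 1/(C+1) ≤ ‖fzC b c (x n) (z n)‖ / gradNormC a b c d (x n) (y n) (z n) :=
    fun n => ratio_lower hC0 (hfzne n) (hle n)
  have hev := htend.eventually (gt_mem_nhds (show (0:ℝ) < 1/(C+1) by positivity))
  obtain ⟨n, hn⟩ := hev.exists
  exact absurd (hlow n) (not_le.2 hn)


lemma not_aReg_2 (a b c d : ℕ) (hb : 0 < b) (hc : 0 < c) (hd : 0 < d)
    (hba : b < a) (hcd : c < d) (hkey : a*c ≤ d*(a-b)) : ¬ aRegC a b c d := by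
  intro hreg
  have ha : 0 < a := by omega
  have hcC : (c:ℂ) ≠ 0 := Nat.cast_ne_zero.2 hc.ne'
  set ζb : ℂ := Complex.exp ((Real.pi / b : ℝ) * Complex.I) with hζbdef
  set ζa : ℂ := Complex.exp ((Real.pi / a : ℝ) * Complex.I) with hζadef
  set rη : ℝ := ((d:ℝ)/c) ^ ((b:ℝ)⁻¹) with hrηdef
  set rμ : ℝ := (((d:ℝ)-c)/c) ^ ((a:ℝ)⁻¹) with hrμdef
  have hdcpos : (0:ℝ) < (d:ℝ)-c := by
    have : (c:ℝ) < d := by exact_mod_cast hcd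
    linarith
  have hrηpos : 0 < rη := Real.rpow_pos_of_pos (by positivity) _
  have hrμpos : 0 < rμ := Real.rpow_pos_of_pos (by positivity) _
  set η : ℂ := (rη:ℂ) * ζb with hηdef
  set μ : ℂ := (rμ:ℂ) * ζa with hμdef
  have hηne : η ≠ 0 :=
    mul_ne_zero (Complex.ofReal_ne_zero.2 hrηpos.ne') (Complex.exp_ne_zero _)
  have hηnorm : ‖η‖ = rη := by
    rw [hηdef, norm_mul, zeta_norm, mul_one, Complex.norm_real, Real.norm_eq_abs,
      abs_of_pos hrηpos]
  have hμnorm : ‖μ‖ = rμ := by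
    rw [hμdef, norm_mul, zeta_norm, mul_one, Complex.norm_real, Real.norm_eq_abs,
      abs_of_pos hrμpos]
  have hηb : η^b = -((d:ℂ)/c) := by
    rw [hηdef, mul_pow, zeta_pow b hb]
    rw [show ((rη:ℝ):ℂ)^b = (((rη^b : ℝ)):ℂ) by push_cast; ring]
    rw [hrηdef, Real.rpow_inv_natCast_pow (by positivity) hb.ne']
    push_cast; ring
  have hμa : μ^a = -(((d:ℂ)-c)/c) := by
    rw [hμdef, mul_pow, zeta_pow a ha]
    rw [show ((rμ:ℝ):ℂ)^a = (((rμ^a : ℝ)):ℂ) by push_cast; ring]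
    rw [hrμdef, Real.rpow_inv_natCast_pow (by positivity) ha.ne']
    push_cast; ring
  set t : ℕ → ℂ := fun n => (((1:ℝ)/(n+1) : ℝ) : ℂ) with htdef
  set x : ℕ → ℂ := fun n => (t n)^(a*b) with hxdef
  set y : ℕ → ℂ := fun n => μ * (t n)^(b*d) with hydef
  set z : ℕ → ℂ := fun n => η * (t n)^(a*(d-c)) with hzdef
  have hxne : ∀ n, x n ≠ 0 := fun n => pow_ne_zero _ (t_ne n)
  have hE : (a*(d-c))*b + (a*b)*c = (a*b)*d := by
    rw [show (a*(d-c))*b = (a*b)*(d-c) from by ring, ← Nat.mul_add]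
    congr 1
    omega
  have hX : ∀ n, inXC a b c d (x n) (y n) (z n) := by
    intro n
    constructor
    · have hy1 : (y n)^a = μ^a * (t n)^((a*b)*d) := by
        rw [hydef]
        rw [mul_pow, ← pow_mul]
        congr 1
        ring
      have hz1 : (z n)^b * (x n)^c + (x n)^d
          = η^b * (t n)^((a*(d-c))*b + (a*b)*c) + (t n)^((a*b)*d) := by
        rw [hzdef, hxdef]
        rw [mul_pow, ← pow_mul, ← pow_mul, mul_assoc, ← pow_add, ← pow_mul]
      rw [hy1, hz1, hμa, hηb, hE]
      rw [show -(((d:ℂ)-c)/c) = -((d:ℂ)/c) + 1 from by field_simp; ring]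
      ring
    · rintro ⟨h1, -⟩
      exact hxne n h1
  have hE1 : (a*(d-c))*b + (a*b)*(c-1) = (a*b)*(d-1) := by
    rw [show (a*(d-c))*b = (a*b)*(d-c) from by ring, ← Nat.mul_add]
    congr 1
    omega
  have hfx0 : ∀ n, fxC b c d (x n) (z n) = 0 := by
    intro n
    rw [fxC, hxdef, hzdef]
    simp only [mul_pow, ← pow_mul]
    rw [hηb]
    have hcd2 : (c:ℂ) * ((d:ℂ)/c) = d := by field_simp
    calc -(c:ℂ) * (-((d:ℂ)/c) * (t n)^((a*(d-c))*b)) * (t n)^((a*b)*(c-1))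
          - (d:ℂ) * (t n)^((a*b)*(d-1))
        = (c:ℂ) * ((d:ℂ)/c) * (t n)^((a*(d-c))*b + (a*b)*(c-1))
          - (d:ℂ) * (t n)^((a*b)*(d-1)) := by rw [pow_add]; ring
    _ = (d:ℂ) * (t n)^((a*b)*(d-1)) - (d:ℂ) * (t n)^((a*b)*(d-1)) := by rw [hE1, hcd2]
    _ = 0 := sub_self _
  have hfz : ∀ n, fzC b c (x n) (z n)
      = -(b:ℂ) * η^(b-1) * (t n)^((a*(d-c))*(b-1) + (a*b)*c) := by
    intro n
    rw [fzC, hxdef, hzdef]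
    simp only [mul_pow, ← pow_mul]
    rw [pow_add]
    ring
  have hfy : ∀ n, fyC a (y n) = (a:ℂ) * μ^(a-1) * (t n)^((b*d)*(a-1)) := by
    intro n
    rw [fyC, hydef]
    simp only [mul_pow, ← pow_mul]
    ring
  have hfzne : ∀ n, fzC b c (x n) (z n) ≠ 0 := by
    intro n
    rw [hfz n]
    exact mul_ne_zero (mul_ne_zero (by
        simpa using (show (b:ℂ) ≠ 0 from Nat.cast_ne_zero.2 hb.ne'))
      (pow_ne_zero _ hηne)) (pow_ne_zero _ (t_ne n))
  have hgrad : ∀ n, gradNeC a b c d (x n) (y n) (z n) := by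
    intro n
    rintro ⟨-, -, h3⟩
    exact hfzne n h3
  have hlim : Tendsto (fun n => (x n, y n, z n)) atTop (nhds ((0:ℂ),(0:ℂ),(0:ℂ))) := by
    have hxl : Tendsto x atTop (nhds 0) := t_tendsto (a*b) (by positivity)
    have hyl : Tendsto y atTop (nhds 0) := by
      have h3 := (t_tendsto (b*d) (by positivity)).const_mul μ
      rw [mul_zero] at h3
      exact h3
    have hzl : Tendsto z atTop (nhds 0) := by
      have h3 := (t_tendsto (a*(d-c)) (by
        have : 0 < d - c := by omega
        positivity)).const_mul η
      rw [mul_zero] at h3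
      exact h3
    exact hxl.prodMk_nhds (hyl.prodMk_nhds hzl)
  have htend := hreg x y z hX hlim hgrad
  have hfznorm : ∀ n, ‖fzC b c (x n) (z n)‖
      = b * rη^(b-1) * (1/(n+1:ℝ))^((a*(d-c))*(b-1) + (a*b)*c) := by
    intro n
    rw [hfz n]
    simp only [htdef]
    rw [norm_mul, norm_mul, norm_neg, norm_pow, norm_pow, hηnorm, t_norm]
    congr 2
    simp
  have hfynorm : ∀ n, ‖fyC a (y n)‖
      = a * rμ^(a-1) * (1/(n+1:ℝ))^((b*d)*(a-1)) := by
    intro n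
    rw [hfy n]
    simp only [htdef]
    rw [norm_mul, norm_mul, norm_pow, norm_pow, hμnorm, t_norm]
    congr 2
    simp
  have hEord : (a*(d-c))*(b-1) + (a*b)*c ≤ (b*d)*(a-1) := by
    have hkey' : (a:ℤ)*c ≤ d*((a:ℤ)-b) := by
      have := hkey
      zify [show b ≤ a from hba.le] at this
      exact this
    zify [show c ≤ d from hcd.le, show 1 ≤ b from hb, show 1 ≤ a from ha]
    nlinarith [hkey']
  set C : ℝ := (a * rμ^(a-1))/(b * rη^(b-1)) with hCdef
  have hC0 : 0 ≤ C := by positivity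
  have hle : ∀ n, ‖fxC b c d (x n) (z n)‖ + ‖fyC a (y n)‖ ≤ C * ‖fzC b c (x n) (z n)‖ := by
    intro n
    rw [hfx0 n, norm_zero, zero_add, hfynorm n, hfznorm n]
    have hrw : C * (b * rη^(b-1) * (1/(n+1:ℝ))^((a*(d-c))*(b-1) + (a*b)*c))
        = a * rμ^(a-1) * (1/(n+1:ℝ))^((a*(d-c))*(b-1) + (a*b)*c) := by
      rw [hCdef]
      have h1 : (b:ℝ) ≠ 0 := by positivity
      have h2 : rη^(b-1) ≠ 0 := by positivity
      field_simp
    rw [hrw]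
    apply mul_le_mul_of_nonneg_left _ (by positivity)
    exact pow_le_pow_of_le_one (s_pos n).le (s_le_one n) hEord
  have hlow : ∀ n, 1/(C+1) ≤ ‖fzC b c (x n) (z n)‖ / gradNormC a b c d (x n) (y n) (z n) :=
    fun n => ratio_lower hC0 (hfzne n) (hle n)
  have hev := htend.eventually (gt_mem_nhds (show (0:ℝ) < 1/(C+1) by positivity))
  obtain ⟨n, hn⟩ := hev.exists
  exact absurd (hlow n) (not_le.2 hn)

/-- Whitney (a)-regularity classification for y^a = z^b x^c + x^d in ℂ³ (Diagram 1). -/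
theorem whitney_a_complex (a b c d : ℕ) (ha : 0 < a) (hb : 0 < b) (hc : 0 < c) (hd : 0 < d) :
    aRegC a b c d ↔
      a = 1 ∨ d ≤ c ∨ (c < d ∧ d < b + c ∧ (a ≤ b ∨ d * (a - b) < a * c)) := by
  constructor
  · intro hreg
    by_contra hcon
    push_neg at hcon
    obtain ⟨ha1, hdc, h3⟩ := hcon
    by_cases h5 : d < b + c
    · obtain ⟨hba, hkey⟩ := h3 hdc h5
      exact not_aReg_2 a b c d hb hc hd hba hdc hkey hreg
    · exact not_aReg_1 a b c d (by omega) hb hc hd hdc (by omega) hreg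
  · rintro (rfl | hdc | ⟨hcd, hdbc, hor⟩)
    · exact aReg_of_a_one b c d hb hc hd
    · exact aReg_of_d_le_c a b c d ha hb hc hd hdc
    · apply aReg_case3 a b c d ha hb hc hd hcd hdbc
      have hac : 0 < a*c := by positivity
      rcases hor with h | h
      · calc a*d ≤ b*d := Nat.mul_le_mul_right d h
        _ < a*c + b*d := by omega
      · rcases le_or_gt a b with hab | hab
        · calc a*d ≤ b*d := Nat.mul_le_mul_right d hab
          _ < a*c + b*d := by omega
        · have h3 : d*(a-b) + d*b = d*a := by rw [← Nat.mul_add]; congr 1; omega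
          have h4 : a*d = d*(a-b) + d*b := by rw [h3]; ring
          calc a*d = d*(a-b) + d*b := h4
          _ < a*c + d*b := Nat.add_lt_add_right h _
          _ = a*c + b*d := by ring
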